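/- Suppose Z is a random variable such that for some v > 0 and all t ≥ 0, P(Z ≥ E[Z] + t) ≤ exp(−v·u(t/v)) where u(y) = (1+y)log(1+y) − y. Then for every η ≥ 0, with probability at least 1 − e^{−η}: Z ≤ E[Z] + (3η)/(2·log(1 + √(η/v))) and also Z ≤ E[Z] + (3/4)·η + (3/2)·√(v·η). -/

import Mathlib

open MeasureTheory

set_option maxHeartbeats 1000000

private lemma aux_log_lower {x : ℝ} (hx : 1 ≤ x) : 2*(x-1)/(x+1) ≤ Real.log x := by
  have hx0 : (0:ℝ) < x := lt_of_lt_of_le one_pos hx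
  set f : ℝ → ℝ := fun y => Real.log y + 4*(y+1)⁻¹ with hf
  have hders : ∀ y ∈ Set.Ici (1:ℝ), HasDerivAt f (y⁻¹ + 4 * (-1/(y+1)^2)) y := by
    intro y hy
    have hy0 : (0:ℝ) < y := lt_of_lt_of_le one_pos hy
    have h1 : HasDerivAt (fun z : ℝ => (z+1)⁻¹) (-1/(y+1)^2) y := by
      have := ((hasDerivAt_id y).add_const 1).inv (by positivity)
      exact this
    exact (Real.hasDerivAt_log hy0.ne').add (h1.const_mul 4)
  have hmono : MonotoneOn f (Set.Ici 1) := by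
    apply monotoneOn_of_deriv_nonneg (convex_Ici 1)
    · exact fun y hy => (hders y hy).continuousAt.continuousWithinAt
    · rw [interior_Ici]
      exact fun y hy => (hders y (Set.mem_Ici.2 (le_of_lt hy))).differentiableAt.differentiableWithinAt
    · rw [interior_Ici]
      intro y hy
      rw [(hders y (Set.mem_Ici.2 (le_of_lt hy))).deriv]
      have hy0 : (0:ℝ) < y := lt_trans one_pos hy
      have he : y⁻¹ + 4 * (-1/(y+1)^2) = (y-1)^2/(y*(y+1)^2) := by
        field_simp; ring
      rw [he]; positivity
  have h01 := hmono (Set.self_mem_Ici) (hx : x ∈ Set.Ici 1) hx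
  have hf1 : f 1 = 2 := by simp [hf, Real.log_one]; norm_num
  have hfx : f x = Real.log x + 4*(x+1)⁻¹ := rfl
  have hx1 : (0:ℝ) < x + 1 := by linarith
  rw [div_le_iff₀ hx1]
  have h2 : (2 - 4*(x+1)⁻¹) * (x+1) ≤ Real.log x * (x+1) := by
    apply mul_le_mul_of_nonneg_right _ hx1.le
    rw [hf1] at h01; rw [hfx] at h01; linarith
  have h3 : (2 - 4*(x+1)⁻¹) * (x+1) = 2*(x-1) := by
    field_simp; ring
  linarith

private lemma aux_log_upper {x : ℝ} (hx : 1 ≤ x) : Real.log x ≤ (x^2-1)/(2*x) := by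
  have hx0 : (0:ℝ) < x := lt_of_lt_of_le one_pos hx
  set f : ℝ → ℝ := fun y => y/2 - (1/2)*y⁻¹ - Real.log y with hf
  have hders : ∀ y ∈ Set.Ici (1:ℝ), HasDerivAt f (1/2 - (1/2)*(-1/y^2) - y⁻¹) y := by
    intro y hy
    have hy0 : (0:ℝ) < y := lt_of_lt_of_le one_pos hy
    have h1 : HasDerivAt (fun z : ℝ => z/2) (1/2) y := by
      simpa using (hasDerivAt_id y).div_const 2
    have h2 : HasDerivAt (fun z : ℝ => z⁻¹) (-1/y^2) y := by
      exact (hasDerivAt_id y).inv hy0.ne'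
    exact (h1.sub (h2.const_mul (1/2))).sub (Real.hasDerivAt_log hy0.ne')
  have hmono : MonotoneOn f (Set.Ici 1) := by
    apply monotoneOn_of_deriv_nonneg (convex_Ici 1)
    · exact fun y hy => (hders y hy).continuousAt.continuousWithinAt
    · rw [interior_Ici]
      exact fun y hy => (hders y (Set.mem_Ici.2 (le_of_lt hy))).differentiableAt.differentiableWithinAt
    · rw [interior_Ici]
      intro y hy
      rw [(hders y (Set.mem_Ici.2 (le_of_lt hy))).deriv]
      have hy0 : (0:ℝ) < y := lt_trans one_pos hy
      have he : 1/2 - (1/2)*(-1/y^2) - y⁻¹ = (y-1)^2/(2*y^2) := by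
        field_simp; ring
      rw [he]; positivity
  have h01 := hmono (Set.self_mem_Ici) (hx : x ∈ Set.Ici 1) hx
  have hf1 : f 1 = 0 := by simp [hf]
  have hfx : f x = x/2 - (1/2)*x⁻¹ - Real.log x := rfl
  rw [hf1, hfx] at h01
  have h3 : (x^2-1)/(2*x) = x/2 - (1/2)*x⁻¹ := by
    field_simp
  linarith

theorem stmt_17 {Ωs : Type*} [MeasurableSpace Ωs] (P : Measure Ωs) [IsProbabilityMeasure P]
    (Z : Ωs → ℝ) (hZ : Integrable Z P) (v : ℝ) (hv : 0 < v)
    (htail : ∀ t : ℝ, 0 ≤ t →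
      P {ω | (∫ ω', Z ω' ∂P) + t ≤ Z ω} ≤
        ENNReal.ofReal (Real.exp (-(v * ((1 + t / v) * Real.log (1 + t / v) - t / v)))))
    (η : ℝ) (hη : 0 ≤ η) :
    ENNReal.ofReal (1 - Real.exp (-η)) ≤
      P {ω | Z ω ≤ (∫ ω', Z ω' ∂P) + 3 * η / (2 * Real.log (1 + Real.sqrt (η / v))) ∧
             Z ω ≤ (∫ ω', Z ω' ∂P) + (3 / 4) * η + (3 / 2) * Real.sqrt (v * η)} := by
  rcases hη.eq_or_lt with rfl | hη0
  · simp
  set m := ∫ ω', Z ω' ∂P with hm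
  set s := Real.sqrt (η/v) with hs
  have hsv : 0 < η/v := div_pos hη0 hv
  have hs0 : 0 < s := Real.sqrt_pos.2 hsv
  have hs2 : s^2 = η/v := Real.sq_sqrt hsv.le
  set L := Real.log (1+s) with hL
  have hL0 : 0 < L := Real.log_pos (by linarith)
  set t₀ := 3*η/(2*L) with ht₀
  have ht0 : 0 < t₀ := div_pos (by linarith) (by linarith)
  have hsq : 0 ≤ Real.sqrt (v*η) := Real.sqrt_nonneg _
  have hseta : s * Real.sqrt (v*η) = η := by
    rw [hs, ← Real.sqrt_mul hsv.le]
    have : η/v*(v*η) = η^2 := by field_simp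
    rw [this, Real.sqrt_sq hη]
  have hLlow : 2*s/(2+s) ≤ L := by
    have := aux_log_lower (x := 1+s) (by linarith)
    have he : 2*((1+s)-1)/((1+s)+1) = 2*s/(2+s) := by ring_nf
    rw [he] at this; exact this
  -- claim 2 : t₀ ≤ (3/4)η + (3/2)√(vη)
  have hclaim2 : t₀ ≤ 3/4*η + 3/2*Real.sqrt (v*η) := by
    rw [ht₀, div_le_iff₀ (by positivity : (0:ℝ) < 2*L)]
    have h2s : (0:ℝ) < 2+s := by linarith
    have hpos : 0 ≤ 3/4*η + 3/2*Real.sqrt (v*η) := by positivity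
    have h6 : 3*η ≤ 2*(2*s/(2+s))*(3/4*η + 3/2*Real.sqrt (v*η)) := by
      rw [show 2*(2*s/(2+s)) = 4*s/(2+s) by ring, div_mul_eq_mul_div, le_div_iff₀ h2s]
      nlinarith [hseta]
    nlinarith [mul_le_mul_of_nonneg_right hLlow hpos]
  -- claim 1 : η ≤ v * u(t₀/v)
  have hexp : Real.exp (-(v * ((1 + t₀/v) * Real.log (1 + t₀/v) - t₀/v))) ≤ Real.exp (-η) := by
    apply Real.exp_le_exp.2
    apply neg_le_neg
    set y := t₀/v with hy
    have hy0 : 0 < y := div_pos ht0 hv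
    -- u(y) ≥ (y/2) log(1+y)
    have hu : (y/2) * Real.log (1+y) ≤ (1+y) * Real.log (1+y) - y := by
      have hlow := aux_log_lower (x := 1+y) (by linarith)
      have he : 2*((1+y)-1)/((1+y)+1) = 2*y/(2+y) := by ring_nf
      rw [he] at hlow
      have h2y : (0:ℝ) < 2+y := by linarith
      rw [div_le_iff₀ h2y] at hlow
      nlinarith [hlow]
    -- key : η ≤ v * ((y/2) log(1+y))
    have hkey : η ≤ v * ((y/2) * Real.log (1+y)) := by
      set a := Real.exp (L/3) with ha
      have ha1 : 1 < a := by
        rw [ha, show (1:ℝ) = Real.exp 0 by simp]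
        exact Real.exp_lt_exp.2 (by linarith)
      have ha0 : 0 < a := lt_trans one_pos ha1
      have ha3 : a^3 = 1+s := by
        rw [ha, ← Real.exp_nat_mul]
        norm_num
        rw [show (3:ℝ) * (L/3) = L by ring, hL, Real.exp_log (by linarith)]
      have hloga : Real.log a = L/3 := Real.log_exp _
      have hupper := aux_log_upper ha1.le
      have ha5 : a ≤ a^5 := by
        calc a = a^1 := (pow_one a).symm
          _ ≤ a^5 := pow_le_pow_right₀ ha1.le (by norm_num)
      have ha3' : (1:ℝ) ≤ a^3 := one_le_pow₀ ha1.le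
      have ha4' : (1:ℝ) ≤ a^4 := one_le_pow₀ ha1.le
      have hgrow : (0:ℝ) ≤ a^5+a^4+a^3-a-1 := by linarith
      have hpoly : (a^4-1)*(a^2-1) ≤ a*(a^3-1)^2 := by
        nlinarith [mul_nonneg (sq_nonneg (a-1)) hgrow]
      have h4 : (0:ℝ) ≤ a^4 - 1 := by linarith
      have hkey2 : 2*(a^4-1)*Real.log a ≤ (a^3-1)^2 := by
        calc 2*(a^4-1)*Real.log a ≤ 2*(a^4-1)*((a^2-1)/(2*a)) := by
              apply mul_le_mul_of_nonneg_left hupper (by linarith)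
          _ ≤ (a^3-1)^2 := by
              rw [show 2*(a^4-1)*((a^2-1)/(2*a)) = ((a^4-1)*(a^2-1))/a by field_simp,
                div_le_iff₀ ha0]
              nlinarith [hpoly]
      -- y ≥ a^4 - 1
      have hyval : y * (2*L) = 3*s^2 := by
        rw [hy, ht₀, hs2]; field_simp
      have hsa : s = a^3 - 1 := by rw [ha3]; ring
      have hLa : L = 3 * Real.log a := by rw [hloga]; ring
      have hyge : a^4 - 1 ≤ y := by
        rw [hsa, hLa] at hyval
        have hla0 : 0 < Real.log a := Real.log_pos ha1
        nlinarith [hkey2, hyval, hla0]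
      have hlog1y : 4 * Real.log a ≤ Real.log (1+y) := by
        have : a^4 ≤ 1 + y := by linarith
        calc 4 * Real.log a = Real.log (a^4) := by rw [Real.log_pow]; push_cast; ring
          _ ≤ Real.log (1+y) := Real.log_le_log (by positivity) this
      -- conclude
      have hfin : v * ((y/2) * (4*Real.log a)) = η := by
        rw [hLa] at hyval
        have : y * Real.log a = s^2 / 2 := by nlinarith [hyval]
        rw [show v * ((y/2) * (4*Real.log a)) = 2 * v * (y * Real.log a) by ring, this, hs2]
        field_simp
      calc η = v * ((y/2) * (4*Real.log a)) := hfin.symm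
        _ ≤ v * ((y/2) * Real.log (1+y)) := by
            apply mul_le_mul_of_nonneg_left _ hv.le
            apply mul_le_mul_of_nonneg_left hlog1y (by linarith)
    calc η ≤ v * ((y/2) * Real.log (1+y)) := hkey
      _ ≤ v * ((1+y) * Real.log (1+y) - y) := mul_le_mul_of_nonneg_left hu hv.le
  -- measure part
  have hT : P {ω | m + t₀ ≤ Z ω} ≤ ENNReal.ofReal (Real.exp (-η)) :=
    le_trans (htail t₀ ht0.le) (ENNReal.ofReal_le_ofReal hexp)
  have hsub : {ω | m + t₀ ≤ Z ω}ᶜ ⊆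
      {ω | Z ω ≤ m + 3 * η / (2 * L) ∧ Z ω ≤ m + 3/4*η + 3/2*Real.sqrt (v*η)} := by
    intro ω hω
    simp only [Set.mem_compl_iff, Set.mem_setOf_eq, not_le] at hω
    have h1 : Z ω ≤ m + t₀ := hω.le
    constructor
    · rw [ht₀] at h1; linarith
    · linarith
  calc ENNReal.ofReal (1 - Real.exp (-η))
      = 1 - ENNReal.ofReal (Real.exp (-η)) := by
        rw [ENNReal.ofReal_sub _ (Real.exp_nonneg _), ENNReal.ofReal_one]
    _ ≤ 1 - P {ω | m + t₀ ≤ Z ω} := tsub_le_tsub_left hT 1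
    _ ≤ P ({ω | m + t₀ ≤ Z ω}ᶜ) := by
        rw [tsub_le_iff_right]
        calc (1:ENNReal) = P Set.univ := measure_univ.symm
          _ = P ({ω | m + t₀ ≤ Z ω}ᶜ ∪ {ω | m + t₀ ≤ Z ω}) := by rw [Set.compl_union_self]
          _ ≤ _ := measure_union_le _ _
    _ ≤ _ := measure_mono hsub
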